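/- For every a₀ > 0 and every integer N ≥ 2 there exists ε₀ ∈ (0,1) such that: for every ε ∈ (0, ε₀] and every P : ℤ → ℂ with |P(q)| ≤ ε for all q ∈ ℤ and |P(q)| ≤ a₀/q² for all q ≠ 0, one has |S(1,n,P)(q)| ≤ ε^{1 + (n−1)/8} for every integer n with 2 ≤ n ≤ N and every q ∈ ℤ. -/

import Mathlib

/-- `Sconv P n` is the `n`-fold self-convolution of the sequence `P : ℤ → ℂ`:
`Sconv P 1 = P` and `Sconv P n = P * Sconv P (n-1)` (convolution on `ℤ`). -/
noncomputable def Sconv (P : ℤ → ℂ) : ℕ → ℤ → ℂ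
  | 0 => fun _ => 0
  | 1 => P
  | (n + 2) => fun q => ∑' k : ℤ, P (q - k) * Sconv P (n + 1) k

lemma sconv_aux (P : ℤ → ℂ) (ε : ℝ) (hε0 : 0 ≤ ε) (hεb : ∀ q, ‖P q‖ ≤ ε)
    (hsum : Summable fun k : ℤ => ‖P k‖) :
    ∀ n : ℕ, ∀ q : ℤ, ‖Sconv P (n + 1) q‖ ≤ ε * (∑' k : ℤ, ‖P k‖) ^ n := by
  intro n
  induction n with
  | zero => intro q; simpa [Sconv] using hεb q
  | succ n ih =>
    intro q
    have hA0 : 0 ≤ ∑' k : ℤ, ‖P k‖ := tsum_nonneg fun _ => norm_nonneg _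
    set B : ℝ := ε * (∑' k : ℤ, ‖P k‖) ^ n with hB
    have hB0 : 0 ≤ B := mul_nonneg hε0 (pow_nonneg hA0 _)
    have hshift : Summable fun k : ℤ => ‖P (q - k)‖ :=
      ((Equiv.subLeft q).summable_iff).2 hsum
    have hle : ∀ k : ℤ, ‖P (q - k) * Sconv P (n + 1) k‖ ≤ ‖P (q - k)‖ * B := by
      intro k
      rw [norm_mul]
      exact mul_le_mul_of_nonneg_left (ih k) (norm_nonneg _)
    have hsum2 : Summable fun k : ℤ => ‖P (q - k) * Sconv P (n + 1) k‖ :=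
      Summable.of_nonneg_of_le (fun _ => norm_nonneg _) hle (hshift.mul_right B)
    have h1 : ‖Sconv P (n + 2) q‖ ≤ ∑' k : ℤ, ‖P (q - k) * Sconv P (n + 1) k‖ := by
      show ‖∑' k : ℤ, P (q - k) * Sconv P (n + 1) k‖ ≤ _
      exact norm_tsum_le_tsum_norm hsum2
    have h2 : (∑' k : ℤ, ‖P (q - k) * Sconv P (n + 1) k‖)
        ≤ ∑' k : ℤ, ‖P (q - k)‖ * B :=
      Summable.tsum_le_tsum hle hsum2 (hshift.mul_right B)
    have h3 : (∑' k : ℤ, ‖P (q - k)‖ * B) = (∑' k : ℤ, ‖P k‖) * B := by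
      rw [tsum_mul_right]
      congr 1
      exact (Equiv.subLeft q).tsum_eq fun k => ‖P k‖
    calc ‖Sconv P (n + 2) q‖ ≤ (∑' k : ℤ, ‖P k‖) * B := by
          refine h1.trans (h2.trans_eq h3)
      _ = ε * (∑' k : ℤ, ‖P k‖) ^ (n + 1) := by rw [hB]; ring

theorem stmt3 (a₀ : ℝ) (ha₀ : 0 < a₀) (N : ℕ) (hN : 2 ≤ N) :
    ∃ ε₀ ∈ Set.Ioo (0 : ℝ) 1,
      ∀ ε : ℝ, ε ∈ Set.Ioc (0 : ℝ) ε₀ →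
      ∀ P : ℤ → ℂ,
        (∀ q : ℤ, ‖P q‖ ≤ ε) →
        (∀ q : ℤ, q ≠ 0 → ‖P q‖ ≤ a₀ / (q : ℝ) ^ 2) →
        ∀ n : ℕ, 2 ≤ n → n ≤ N →
        ∀ q : ℤ, ‖Sconv P n q‖ ≤ ε ^ ((1 : ℝ) + ((n : ℝ) - 1) / 8) := by
  -- constants
  set C₀ : ℝ := ∑' k : ℤ, |(k : ℝ)| ^ (-(3/2 : ℝ)) with hC₀
  have hC₀sum : Summable fun k : ℤ => |(k : ℝ)| ^ (-(3/2 : ℝ)) :=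
    Real.summable_abs_int_rpow (by norm_num)
  have hC₀0 : 0 ≤ C₀ := tsum_nonneg fun k => Real.rpow_nonneg (abs_nonneg _) _
  set M : ℝ := 1 + a₀ ^ ((3:ℝ)/4) * C₀ with hM
  have hM1 : 1 ≤ M := le_add_of_nonneg_right (mul_nonneg (Real.rpow_nonneg ha₀.le _) hC₀0)
  have hM0 : 0 < M := lt_of_lt_of_le one_pos hM1
  refine ⟨(M⁻¹) ^ 8 / 2, ⟨by positivity, ?_⟩, ?_⟩
  · have : (M⁻¹) ^ 8 ≤ 1 := pow_le_one₀ (by positivity) (inv_le_one_of_one_le₀ hM1)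
    linarith
  intro ε ⟨hε0, hεle⟩ P hPb hPd n hn2 _ q
  have hε1 : ε ≤ 1 := by
    have : (M⁻¹) ^ 8 ≤ 1 := pow_le_one₀ (by positivity) (inv_le_one_of_one_le₀ hM1)
    linarith
  -- summability of ‖P‖
  have hg : Summable fun k : ℤ => (if k = 0 then ε else 0) + a₀ / (k : ℝ) ^ 2 := by
    apply Summable.add
    · exact summable_of_ne_finset_zero (s := {0}) (by intro k hk; simp at hk; simp [hk])
    · have := (Real.summable_one_div_int_pow (p := 2)).2 one_lt_two
      exact (this.mul_left a₀).congr (by intro k; rw [mul_one_div])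
  have hsum : Summable fun k : ℤ => ‖P k‖ := by
    apply Summable.of_nonneg_of_le (fun _ => norm_nonneg _) _ hg
    intro k
    rcases eq_or_ne k 0 with rfl | hk
    · simpa using hPb 0
    · simpa [hk] using hPd k hk
  -- bound on the ℓ¹ norm: A ≤ ε^(1/4) * M
  set A : ℝ := ∑' k : ℤ, ‖P k‖ with hA
  have hA0 : 0 ≤ A := tsum_nonneg fun _ => norm_nonneg _
  have hhsum : Summable fun k : ℤ =>
      ε ^ ((1:ℝ)/4) * ((if k = 0 then (1:ℝ) else 0) + a₀ ^ ((3:ℝ)/4) * |(k : ℝ)| ^ (-(3/2 : ℝ))) := by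
    apply Summable.mul_left
    apply Summable.add
    · exact summable_of_ne_finset_zero (s := {0}) (by intro k hk; simp at hk; simp [hk])
    · exact hC₀sum.mul_left _
  have hptwise : ∀ k : ℤ, ‖P k‖ ≤
      ε ^ ((1:ℝ)/4) * ((if k = 0 then (1:ℝ) else 0) + a₀ ^ ((3:ℝ)/4) * |(k : ℝ)| ^ (-(3/2 : ℝ))) := by
    intro k
    rcases eq_or_ne k 0 with rfl | hk
    · have h0 : |((0:ℤ) : ℝ)| ^ (-(3/2 : ℝ)) = 0 := by
        simp [Real.zero_rpow (by norm_num : (-(3/2 : ℝ)) ≠ 0)]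
      have : ε ≤ ε ^ ((1:ℝ)/4) := by
        nth_rewrite 1 [← Real.rpow_one ε]
        exact Real.rpow_le_rpow_of_exponent_ge hε0 hε1 (by norm_num)
      simpa [h0] using (hPb 0).trans this
    · have hk1 : (1:ℝ) ≤ |(k : ℝ)| := by
        rw [← Int.cast_abs]; exact_mod_cast Int.one_le_abs hk
      have hkpos : (0:ℝ) < |(k : ℝ)| := lt_of_lt_of_le one_pos hk1
      have hsplit : ‖P k‖ = ‖P k‖ ^ ((1:ℝ)/4) * ‖P k‖ ^ ((3:ℝ)/4) := by
        rw [← Real.rpow_add' (norm_nonneg _) (by norm_num)]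
        norm_num
      have h1 : ‖P k‖ ^ ((1:ℝ)/4) ≤ ε ^ ((1:ℝ)/4) :=
        Real.rpow_le_rpow (norm_nonneg _) (hPb k) (by norm_num)
      have h2 : ‖P k‖ ^ ((3:ℝ)/4) ≤ (a₀ / (k : ℝ) ^ 2) ^ ((3:ℝ)/4) :=
        Real.rpow_le_rpow (norm_nonneg _) (hPd k hk) (by norm_num)
      have h3 : (a₀ / (k : ℝ) ^ 2) ^ ((3:ℝ)/4) = a₀ ^ ((3:ℝ)/4) * |(k : ℝ)| ^ (-(3/2 : ℝ)) := by
        rw [Real.div_rpow ha₀.le (sq_nonneg _)]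
        rw [← sq_abs, ← Real.rpow_natCast |(k:ℝ)| 2, ← Real.rpow_mul (abs_nonneg _)]
        rw [Real.rpow_neg (abs_nonneg _), div_eq_mul_inv]
        norm_num
      calc ‖P k‖ = ‖P k‖ ^ ((1:ℝ)/4) * ‖P k‖ ^ ((3:ℝ)/4) := hsplit
        _ ≤ ε ^ ((1:ℝ)/4) * (a₀ / (k : ℝ) ^ 2) ^ ((3:ℝ)/4) :=
            mul_le_mul h1 h2 (Real.rpow_nonneg (norm_nonneg _) _) (Real.rpow_nonneg hε0.le _)
        _ = ε ^ ((1:ℝ)/4) * ((if k = 0 then (1:ℝ) else 0) + a₀ ^ ((3:ℝ)/4) * |(k : ℝ)| ^ (-(3/2 : ℝ))) := by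
            rw [h3]; simp [hk]
  have hAbound : A ≤ ε ^ ((1:ℝ)/4) * M := by
    have htsum : (∑' k : ℤ, ε ^ ((1:ℝ)/4) *
        ((if k = 0 then (1:ℝ) else 0) + a₀ ^ ((3:ℝ)/4) * |(k : ℝ)| ^ (-(3/2 : ℝ))))
        = ε ^ ((1:ℝ)/4) * M := by
      rw [tsum_mul_left]
      congr 1
      rw [Summable.tsum_add (summable_of_ne_finset_zero (s := {0})
            (by intro k hk; simp at hk; simp [hk])) (hC₀sum.mul_left _)]
      rw [tsum_ite_eq (0:ℤ) (fun _ => (1:ℝ)), tsum_mul_left, hM, hC₀]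
    rw [hA, ← htsum]
    exact Summable.tsum_le_tsum hptwise hsum hhsum
  -- final bound
  have key : ∀ m : ℕ, ∀ q : ℤ, ‖Sconv P (m + 1) q‖ ≤ ε * A ^ m :=
    sconv_aux P ε hε0.le hPb hsum
  obtain ⟨m, rfl⟩ : ∃ m, n = m + 1 := ⟨n - 1, by omega⟩
  refine (key m q).trans ?_
  have hε14 : (0:ℝ) ≤ ε ^ ((1:ℝ)/4) := Real.rpow_nonneg hε0.le _
  have step1 : ε * A ^ m ≤ ε * (ε ^ ((1:ℝ)/4) * M) ^ m :=
    mul_le_mul_of_nonneg_left (pow_le_pow_left₀ hA0 hAbound m) hε0.le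
  refine step1.trans ?_
  -- ε * (ε^{1/4} M)^m = M^m * ε^{1 + m/4}
  have hε18M : ε ^ ((1:ℝ)/8) * M ≤ 1 := by
    have h1 : ε ^ ((1:ℝ)/8) ≤ ((M⁻¹) ^ 8 / 2) ^ ((1:ℝ)/8) :=
      Real.rpow_le_rpow hε0.le hεle (by norm_num)
    have h2 : ((M⁻¹) ^ 8 / 2) ^ ((1:ℝ)/8) ≤ ((M⁻¹) ^ 8) ^ ((1:ℝ)/8) := by
      apply Real.rpow_le_rpow (by positivity) _ (by norm_num)
      have : (0:ℝ) ≤ (M⁻¹) ^ 8 := by positivity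
      linarith
    have h3 : ((M⁻¹) ^ 8 : ℝ) ^ ((1:ℝ)/8) = M⁻¹ := by
      rw [← Real.rpow_natCast (M⁻¹) 8, ← Real.rpow_mul (by positivity)]
      norm_num
    have h4 : ε ^ ((1:ℝ)/8) ≤ M⁻¹ := h1.trans (h2.trans_eq h3)
    calc ε ^ ((1:ℝ)/8) * M ≤ M⁻¹ * M :=
          mul_le_mul_of_nonneg_right h4 hM0.le
      _ = 1 := inv_mul_cancel₀ (ne_of_gt hM0)
  -- rewrite target and LHS using rpow algebra
  have hcast : ((m : ℝ) + 1 - 1) / 8 = (m : ℝ) / 8 := by ring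
  have expand : ε * (ε ^ ((1:ℝ)/4) * M) ^ m
      = ε ^ ((1:ℝ) + (m : ℝ) / 8) * (ε ^ ((1:ℝ)/8) * M) ^ m := by
    rw [mul_pow, mul_pow, ← Real.rpow_natCast (ε ^ ((1:ℝ)/4)) m,
        ← Real.rpow_natCast (ε ^ ((1:ℝ)/8)) m,
        ← Real.rpow_mul hε0.le, ← Real.rpow_mul hε0.le,
        ← mul_assoc, ← mul_assoc]
    nth_rewrite 1 [← Real.rpow_one ε]
    rw [← Real.rpow_add hε0, ← Real.rpow_add hε0]
    ring_nf
  have : ε ^ ((1:ℝ) + (m : ℝ) / 8) * (ε ^ ((1:ℝ)/8) * M) ^ m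
      ≤ ε ^ ((1:ℝ) + (m : ℝ) / 8) * 1 := by
    apply mul_le_mul_of_nonneg_left _ (Real.rpow_nonneg hε0.le _)
    exact pow_le_one₀ (by positivity) hε18M
  calc ε * (ε ^ ((1:ℝ)/4) * M) ^ m
      ≤ ε ^ ((1:ℝ) + (m : ℝ) / 8) * 1 := by rw [expand]; exact this
    _ = ε ^ ((1 : ℝ) + ((↑(m + 1) : ℝ) - 1) / 8) := by
        push_cast; rw [hcast, mul_one]
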